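/- Let H be an m×n matrix over F₂ with Gram matrix G = Hᵀ H. Let C ⊆ F₂^m be the column space of H, C⊥ its dual code, and D = C ∩ C⊥. Then rank(G) = dim(C) − dim(D). -/

import Mathlib

/-- The dual code of a binary linear code `C ⊆ F₂^m`:
`C⊥ = {v : v · w = 0 for all w ∈ C}`. -/
def dualCode {m : ℕ} (C : Submodule (ZMod 2) (Fin m → ZMod 2)) :
    Submodule (ZMod 2) (Fin m → ZMod 2) where
  carrier := {v | ∀ w ∈ C, dotProduct v w = 0}
  add_mem' := by
    intro a b ha hb w hw
    simp only [Set.mem_setOf_eq] at *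
    rw [add_dotProduct, ha w hw, hb w hw, add_zero]
  zero_mem' := by
    intro w _
    exact zero_dotProduct w
  smul_mem' := by
    intro r a ha w hw
    simp only [Set.mem_setOf_eq] at *
    rw [smul_dotProduct, ha w hw, smul_zero]

open Matrix in
/-- Let `H` be an `m×n` matrix over `F₂` with Gram matrix `G = Hᵀ H`.
Let `C` be the column space of `H`, `C⊥` its dual code, and `D = C ∩ C⊥`.
Then `rank G = dim C − dim D`. -/
theorem rank_gram_eq_dim_sub (m n : ℕ) (H : Matrix (Fin m) (Fin n) (ZMod 2)) :
    (H.transpose * H).rank =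
      Module.finrank (ZMod 2) ↥(LinearMap.range H.mulVecLin) -
        Module.finrank (ZMod 2)
          ↥(LinearMap.range H.mulVecLin ⊓ dualCode (LinearMap.range H.mulVecLin)) := by
  set C := LinearMap.range H.mulVecLin
  have hker : LinearMap.ker H.transpose.mulVecLin = dualCode C := by
    ext v
    constructor
    · intro hv w hw
      obtain ⟨a, rfl⟩ := hw
      rw [Matrix.mulVecLin_apply (M := H), Matrix.dotProduct_mulVec, ← Matrix.mulVec_transpose,
        show Hᵀ *ᵥ v = 0 from hv, zero_dotProduct]
    · intro hv
      have hz : v ᵥ* H = 0 := by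
        funext j
        have h0 := hv _ ⟨Pi.single j 1, rfl⟩
        rw [Matrix.mulVecLin_apply (M := H), Matrix.dotProduct_mulVec] at h0
        simpa using h0
      simp [LinearMap.mem_ker, Matrix.mulVecLin_apply, Matrix.mulVec_transpose, hz]
  have hrange : (Hᵀ * H).rank = Module.finrank (ZMod 2)
      ↥(Submodule.map Hᵀ.mulVecLin C) := by
    rw [Matrix.rank, Matrix.mulVecLin_mul, LinearMap.range_comp]
  have hrn := LinearMap.finrank_range_add_finrank_ker (Hᵀ.mulVecLin.domRestrict C)
  rw [LinearMap.range_domRestrict] at hrn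
  have hk : Module.finrank (ZMod 2) ↥(LinearMap.ker (Hᵀ.mulVecLin.domRestrict C))
      = Module.finrank (ZMod 2) ↥(C ⊓ dualCode C) := by
    rw [LinearMap.ker_domRestrict, ← Submodule.finrank_map_subtype_eq,
      Submodule.map_comap_subtype, hker]
  omega
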